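/- Let A be a discrete valuation ring with uniformizer t, and let φ : A[X₀,…,Xₙ] → R be an A-algebra homomorphism, where R is an A-algebra that is torsion-free as an A-module, R is finitely generated as a module over the image subring φ(A[X₀,…,Xₙ]), and the quotient ring R/tR is reduced. Then, inside the localization R[t⁻¹], the integral closure of (the image of) the subring φ(A[X₀,…,Xₙ]) equals the image of R. In particular, R is uniquely determined by its generic fiber: it is the integral closure of the image of A[X₀,…,Xₙ] in R ⊗_A Frac(A). (Ring-theoretic form of Corollary 2.3, the separatedness of the functor of branchvarieties.) -/

import Mathlib

lemma mem_range_of_isIntegral_away {R S : Type*} [CommRing R] [CommRing S] [Algebra R S]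
    (s : R) (hs : s ∈ nonZeroDivisors R) [IsLocalization.Away s S]
    (hred : IsReduced (R ⧸ Ideal.span {s})) {y : S}
    (hy : (algebraMap R S).IsIntegralElem y) : y ∈ (algebraMap R S).range := by
  obtain ⟨p, hp, hpy⟩ := hy
  have hinj : Function.Injective (algebraMap R S) :=
    IsLocalization.injective S (Submonoid.powers_le.mpr hs)
  rcases subsingleton_or_nontrivial S with hS | hS
  · exact ⟨0, Subsingleton.elim _ _⟩
  have hd : p.natDegree ≠ 0 := by
    intro h
    have : p = 1 := (Polynomial.Monic.natDegree_eq_zero hp).mp h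
    rw [this, Polynomial.eval₂_one] at hpy
    exact one_ne_zero hpy
  suffices H : ∀ (k : ℕ) (r : R), y * algebraMap R S s ^ k = algebraMap R S r →
      y ∈ (algebraMap R S).range by
    obtain ⟨⟨r, c⟩, e⟩ := IsLocalization.surj (Submonoid.powers s) y
    obtain ⟨k, hk⟩ := c.2
    refine H k r ?_
    rw [← hk] at e
    simpa [map_pow] using e
  intro k
  induction k with
  | zero => intro r hr; exact ⟨r, by simpa using hr.symm⟩
  | succ k ih =>
    intro r hr
    set d := p.natDegree with hdd
    set q := p.scaleRoots (s ^ (k + 1)) with hq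
    have hrq : algebraMap R S (s ^ (k + 1)) * y = algebraMap R S r := by
      rw [map_pow, mul_comm]; exact hr
    have hq0 : q.eval₂ (algebraMap R S) (algebraMap R S r) = 0 := by
      rw [← hrq]; exact Polynomial.scaleRoots_eval₂_eq_zero _ hpy
    have hqr : q.eval r = 0 := by
      apply hinj
      rw [← Polynomial.eval₂_hom, hq0, map_zero]
    have hmq : q.Monic := (Polynomial.monic_scaleRoots_iff _).mpr hp
    have hdq : q.natDegree = d := Polynomial.natDegree_scaleRoots _ _
    have hsum : r ^ d + ∑ i ∈ Finset.range d, q.coeff i * r ^ i = 0 := by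
      have h1 := Polynomial.eval_eq_sum_range (p := q) r
      rw [hdq] at h1
      rw [Finset.sum_range_succ] at h1
      have hcd : q.coeff d = 1 := by
        rw [← hdq]; exact hmq.coeff_natDegree
      rw [hcd, one_mul] at h1
      rw [hqr] at h1
      linear_combination -h1
    have hdvd : s ∣ r ^ d := by
      have hrd : r ^ d = -∑ i ∈ Finset.range d, q.coeff i * r ^ i := by linear_combination hsum
      rw [hrd]
      refine dvd_neg.mpr (Finset.dvd_sum fun i hi => ?_)
      have h2 : s ∣ q.coeff i := by
        rw [hq, Polynomial.coeff_scaleRoots]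
        exact (dvd_pow (dvd_pow_self s (Nat.succ_ne_zero k))
          (Nat.sub_ne_zero_of_lt (hdd ▸ Finset.mem_range.mp hi))).mul_left _
      exact h2.mul_right _
    have hrs : s ∣ r := by
      have h3 : (Ideal.Quotient.mk (Ideal.span {s}) r) ^ d = 0 := by
        rw [← map_pow, Ideal.Quotient.eq_zero_iff_mem, Ideal.mem_span_singleton]
        exact hdvd
      have h4 : Ideal.Quotient.mk (Ideal.span {s}) r = 0 := IsNilpotent.eq_zero ⟨d, h3⟩
      rwa [Ideal.Quotient.eq_zero_iff_mem, Ideal.mem_span_singleton] at h4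
    obtain ⟨r', rfl⟩ := hrs
    have hu : IsUnit (algebraMap R S s) :=
      IsLocalization.map_units S (⟨s, Submonoid.mem_powers s⟩ : Submonoid.powers s)
    refine ih r' (hu.mul_left_cancel ?_)
    calc algebraMap R S s * (y * algebraMap R S s ^ k)
        = y * algebraMap R S s ^ (k + 1) := by ring
      _ = algebraMap R S (s * r') := hr
      _ = algebraMap R S s * algebraMap R S r' := by rw [map_mul]

lemma main_aux {A R S : Type*} [CommRing A] [CommRing R] [Algebra A R]
    [NoZeroSMulDivisors A R] [CommRing S] [Algebra A S] [Algebra R S] [IsScalarTower A R S]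
    {t : A} (ht0 : t ≠ 0) {n : ℕ} (φ : MvPolynomial (Fin (n + 1)) A →ₐ[A] R)
    (hfin : Module.Finite ↥φ.range R)
    (hred : IsReduced (R ⧸ Ideal.span {algebraMap A R t}))
    [IsLocalization.Away (algebraMap A R t) S] (y : S) :
    IsIntegral ↥((IsScalarTower.toAlgHom A R S).comp φ).range y ↔
      y ∈ (algebraMap R S).range := by
  set s : R := algebraMap A R t with hs
  have hsreg : s ∈ nonZeroDivisors R := by
    refine mem_nonZeroDivisors_iff_right.mpr ?_
    intro r hr
    have : t • r = 0 := by rw [Algebra.smul_def, mul_comm]; exact hr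
    rcases NoZeroSMulDivisors.eq_zero_or_eq_zero_of_smul_eq_zero this with h | h
    · exact absurd h ht0
    · exact h
  set T : Subalgebra A S := ((IsScalarTower.toAlgHom A R S).comp φ).range with hT
  constructor
  · intro hy
    rcases subsingleton_or_nontrivial S with hS | hS
    · exact ⟨0, Subsingleton.elim _ _⟩
    obtain ⟨p, hp, hpy⟩ := hy
    haveI : Nontrivial ↥T := T.toSubring.nontrivial
    set ρ : MvPolynomial (Fin (n + 1)) A →ₐ[A] ↥T :=
      ((IsScalarTower.toAlgHom A R S).comp φ).rangeRestrict with hρ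
    have hρs : Function.Surjective ρ := AlgHom.rangeRestrict_surjective _
    have hlift : p ∈ Polynomial.lifts ρ.toRingHom := by
      rw [Polynomial.lifts_iff_coeff_lifts]
      intro m
      exact hρs (p.coeff m)
    obtain ⟨p', hp'map, _, hp'monic⟩ := Polynomial.lifts_and_degree_eq_and_monic hlift hp
    refine mem_range_of_isIntegral_away s hsreg hred ⟨p'.map φ.toRingHom, hp'monic.map _, ?_⟩
    rw [Polynomial.eval₂_map]
    have hcomp : ((algebraMap R S).comp φ.toRingHom)
        = ((algebraMap (↥T) S).comp ρ.toRingHom) := by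
      ext x <;> rfl
    rw [hcomp, ← Polynomial.eval₂_map, hp'map]
    exact hpy
  · rintro ⟨r, rfl⟩
    haveI := hfin
    have h1 : IsIntegral ↥φ.range r := Algebra.IsIntegral.isIntegral r
    obtain ⟨p, hp, hpr⟩ := h1
    have hmem : ∀ x : ↥φ.range, (IsScalarTower.toAlgHom A R S).comp φ.range.val x ∈ T := by
      rintro ⟨x, q, rfl⟩
      exact ⟨q, rfl⟩
    set χ : ↥φ.range →ₐ[A] ↥T :=
      AlgHom.codRestrict ((IsScalarTower.toAlgHom A R S).comp φ.range.val) T hmem with hχ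
    refine ⟨p.map χ.toRingHom, hp.map _, ?_⟩
    rw [Polynomial.eval₂_map]
    have hcomp : ((algebraMap (↥T) S).comp χ.toRingHom)
        = (algebraMap R S).comp (algebraMap ↥φ.range R) := by
      ext x
      rfl
    rw [hcomp, ← Polynomial.hom_eval₂, hpr, map_zero]

open scoped TensorProduct in
lemma tensor_isLocalization (A R : Type*) [CommRing A] [IsDomain A] [IsDiscreteValuationRing A]
    [CommRing R] [Algebra A R] [NoZeroSMulDivisors A R] {t : A} (ht : Irreducible t) :
    IsLocalization.Away (algebraMap A R t) (R ⊗[A] FractionRing A) := by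
  classical
  set K := FractionRing A with hK
  set S' := R ⊗[A] K with hS'
  let f0 : R →ₗ[A] K ⊗[A] R := TensorProduct.mk A K R 1
  haveI h0 : IsLocalizedModule (nonZeroDivisors A) f0 :=
    (isLocalizedModule_iff_isBaseChange (nonZeroDivisors A) K f0).mpr
      (TensorProduct.isBaseChange A R K)
  let e : K ⊗[A] R ≃ₗ[A] R ⊗[A] K := TensorProduct.comm A K R
  haveI hf : IsLocalizedModule (nonZeroDivisors A) (e.toLinearMap ∘ₗ f0) := inferInstance
  set f : R →ₗ[A] S' := e.toLinearMap ∘ₗ f0 with hfdef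
  have hfe : ∀ r : R, f r = algebraMap R S' r := by
    intro r
    show (TensorProduct.comm A K R) ((1 : K) ⊗ₜ[A] r) = algebraMap R S' r
    rw [TensorProduct.comm_tmul]
    rfl
  have hinj : Function.Injective (algebraMap R S') := by
    intro a b hab
    have h1 : f (a - b) = 0 := by rw [map_sub, hfe, hfe, hab, sub_self]
    obtain ⟨c, hc⟩ := (IsLocalizedModule.eq_zero_iff (nonZeroDivisors A) f).mp h1
    have hc0 : (c : A) ≠ 0 := mem_nonZeroDivisors_iff_ne_zero.mp c.2
    rcases smul_eq_zero.mp hc with h | h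
    · exact absurd h hc0
    · exact sub_eq_zero.mp h
  have key1 : ∀ x : A, algebraMap R S' (algebraMap A R x) = algebraMap A S' x :=
    fun x => (IsScalarTower.algebraMap_apply A R S' x).symm
  have htK : IsUnit (algebraMap A S' t) := by
    have h1 : IsUnit (algebraMap A K t) :=
      IsLocalization.map_units K ⟨t, mem_nonZeroDivisors_of_ne_zero ht.ne_zero⟩
    have h2 := h1.map (Algebra.TensorProduct.includeRight (R := A) (A := R) (B := K))
    have h3 : algebraMap A S' t = (1 : R) ⊗ₜ[A] (algebraMap A K t) := by
      rw [IsScalarTower.algebraMap_apply A R S']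
      show (algebraMap A R t) ⊗ₜ[A] (1 : K) = _
      rw [Algebra.algebraMap_eq_smul_one (A := R), Algebra.algebraMap_eq_smul_one (A := K),
        TensorProduct.smul_tmul]
    rw [h3]
    exact h2
  refine ⟨⟨?_, ?_, ?_⟩⟩
  · rintro ⟨x, k, rfl⟩
    rw [map_pow, key1]
    exact htK.pow k
  · intro z
    obtain ⟨⟨r, c⟩, hc⟩ := IsLocalizedModule.surj (nonZeroDivisors A) f z
    obtain ⟨k, u, hu⟩ := IsDiscreteValuationRing.eq_unit_mul_pow_irreducible
      (mem_nonZeroDivisors_iff_ne_zero.mp c.2) ht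
    refine ⟨⟨algebraMap A R (↑u⁻¹) * r, ⟨algebraMap A R t ^ k, ⟨k, rfl⟩⟩⟩, ?_⟩
    have hcz : algebraMap A S' (↑c) * z = algebraMap R S' r := by
      rw [← hfe, ← hc, Submonoid.smul_def]
      exact (Algebra.smul_def ((c : A)) z).symm
    have hut : IsUnit (algebraMap A S' ((u : Aˣ) : A)) := (Units.isUnit u).map (algebraMap A S')
    apply hut.mul_left_cancel
    calc algebraMap A S' (↑u) * (z * algebraMap R S' (algebraMap A R t ^ k))
        = algebraMap A S' ((↑u) * t ^ k) * z := by
          rw [← map_pow (algebraMap A R) t k, key1, map_mul]; ring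
      _ = algebraMap R S' r := by rw [← hu, hcz]
      _ = algebraMap A S' (↑u) * algebraMap R S' (algebraMap A R (↑u⁻¹) * r) := by
          rw [map_mul, key1, ← mul_assoc, ← map_mul, Units.mul_inv, map_one, one_mul]
  · intro x y h
    exact ⟨1, by rw [hinj h]⟩


open scoped TensorProduct

/-- Let `A` be a DVR with uniformizer `t` and `φ : A[X₀,…,Xₙ] → R` an `A`-algebra
homomorphism, where `R` is torsion-free over `A`, finite as a module over the image of
`φ`, and `R/tR` is reduced.  Then in `R[t⁻¹]` the integral closure of the image of
`φ(A[X₀,…,Xₙ])` equals the image of `R`; in particular `R` is the integral closure of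
the image of `A[X₀,…,Xₙ]` in `R ⊗[A] Frac(A)`. -/
theorem branch_separatedness
    (A R : Type*) [CommRing A] [IsDomain A] [IsDiscreteValuationRing A]
    [CommRing R] [Algebra A R] [NoZeroSMulDivisors A R]
    (t : A) (ht : Irreducible t) (n : ℕ)
    (φ : MvPolynomial (Fin (n + 1)) A →ₐ[A] R)
    (hfin : Module.Finite ↥φ.range R)
    (hred : IsReduced (R ⧸ Ideal.span {algebraMap A R t})) :
    (∀ y : Localization.Away (algebraMap A R t),
        IsIntegral
          ↥((IsScalarTower.toAlgHom A R (Localization.Away (algebraMap A R t))).comp φ).range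
          y ↔
        y ∈ (algebraMap R (Localization.Away (algebraMap A R t))).range) ∧
    (∀ z : R ⊗[A] FractionRing A,
        IsIntegral
          ↥((Algebra.TensorProduct.includeLeft :
              R →ₐ[A] R ⊗[A] FractionRing A).comp φ).range
          z ↔
        z ∈ (Algebra.TensorProduct.includeLeft :
              R →ₐ[A] R ⊗[A] FractionRing A).range) := by
  constructor
  · intro y
    exact main_aux ht.ne_zero φ hfin hred y
  · intro z
    haveI : IsLocalization.Away (algebraMap A R t) (R ⊗[A] FractionRing A) :=
      tensor_isLocalization A R ht
    have h := main_aux (S := R ⊗[A] FractionRing A) ht.ne_zero φ hfin hred z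
    have hEq : (IsScalarTower.toAlgHom A R (R ⊗[A] FractionRing A)).comp φ
        = (Algebra.TensorProduct.includeLeft : R →ₐ[A] R ⊗[A] FractionRing A).comp φ := by
      ext x
      rfl
    rw [hEq] at h
    rw [h]
    constructor
    · rintro ⟨r, hr⟩; exact ⟨r, hr⟩
    · rintro ⟨r, hr⟩; exact ⟨r, hr⟩
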